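/- There is a unique ℤ_[2]-algebra homomorphism σ : R → R with σ(a₁) = a₁, σ(a₃) = a₃, and σ(a₆) = −a₆ − c (this is well defined because −a₆ − c satisfies the same quadratic relation f as a₆); it satisfies σ ∘ σ = id, and its fixed subring {r ∈ R : σ(r) = r} equals the ℤ_[2]-subalgebra of R generated by a₁ and a₃. (This is the Atkin–Lehner involution w₁₅ on the ring of automorphic forms of the double cover, and the computation of its invariants.) -/

import Mathlib

open MvPolynomial

noncomputable section

/-- `c = a₁⁶ + a₁³a₃ + a₃²` in `P = ℤ_[2][a₁, a₃, a₆]` (with `X 0 = a₁`, `X 1 = a₃`, `X 2 = a₆`). -/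
def cpoly : MvPolynomial (Fin 3) ℤ_[2] := (X 0) ^ 6 + (X 0) ^ 3 * X 1 + (X 1) ^ 2

/-- `f = a₆² + a₆·c + c² − (5/9)·a₁⁶·c` in `P`. -/
def fpoly : MvPolynomial (Fin 3) ℤ_[2] :=
  (X 2) ^ 2 + X 2 * cpoly + cpoly ^ 2 - C (5 * Ring.inverse 9) * (X 0) ^ 6 * cpoly

/-- `R = P/(f)`, the ring of automorphic forms on the double cover `𝒴`. -/
abbrev RD : Type := MvPolynomial (Fin 3) ℤ_[2] ⧸ Ideal.span {fpoly}

/-- The image of `a₁` in `R`. -/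
def b₁ : RD := Ideal.Quotient.mk _ (X 0)
/-- The image of `a₃` in `R`. -/
def b₃ : RD := Ideal.Quotient.mk _ (X 1)
/-- The image of `a₆` in `R`. -/
def b₆ : RD := Ideal.Quotient.mk _ (X 2)


/-- The image of `c = a₁⁶ + a₁³a₃ + a₃²` in `R`. -/
def bc : RD := b₁ ^ 6 + b₁ ^ 3 * b₃ + b₃ ^ 2

namespace AL

abbrev Pring := MvPolynomial (Fin 3) ℤ_[2]
abbrev Aring := MvPolynomial (Fin 2) ℤ_[2]

/-- The quotient map as an algebra homomorphism. -/
def mkq : Pring →ₐ[ℤ_[2]] RD := Ideal.Quotient.mkₐ ℤ_[2] (Ideal.span {fpoly})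

lemma mkq_apply (p : Pring) : mkq p = Ideal.Quotient.mk _ p := rfl
lemma mkq_X0 : mkq (X 0) = b₁ := rfl
lemma mkq_X1 : mkq (X 1) = b₃ := rfl
lemma mkq_X2 : mkq (X 2) = b₆ := rfl

/-- Identify `P` with `A[a₆]` where `A = ℤ_[2][a₁,a₃]`. -/
def Eeq : Pring ≃ₐ[ℤ_[2]] Polynomial Aring :=
  (renameEquiv ℤ_[2] (finRotate 3)).trans (MvPolynomial.finSuccEquiv ℤ_[2] 2)

lemma Eeq_X0 : Eeq (X 0) = Polynomial.C (X 0) := by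
  rw [Eeq]; simp only [AlgEquiv.trans_apply, renameEquiv_apply, rename_X,
    show (finRotate 3) 0 = Fin.succ 0 by decide, finSuccEquiv_X_succ]

lemma Eeq_X1 : Eeq (X 1) = Polynomial.C (X 1) := by
  rw [Eeq]; simp only [AlgEquiv.trans_apply, renameEquiv_apply, rename_X,
    show (finRotate 3) 1 = Fin.succ 1 by decide, finSuccEquiv_X_succ]

lemma Eeq_X2 : Eeq (X 2) = Polynomial.X := by
  rw [Eeq]; simp only [AlgEquiv.trans_apply, renameEquiv_apply, rename_X,
    show (finRotate 3) 2 = 0 by decide, finSuccEquiv_X_zero]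

def c₂ : Aring := X 0 ^ 6 + X 0 ^ 3 * X 1 + X 1 ^ 2
def k₂ : Aring := C (5 * Ring.inverse 9) * X 0 ^ 6

/-- Embedding `A → P`. -/
def ι : Aring →ₐ[ℤ_[2]] Pring := aeval ![X 0, X 1]

lemma ι_X0 : ι (X 0) = X 0 := by simp [ι]
lemma ι_X1 : ι (X 1) = X 1 := by simp [ι]

lemma Eι (q : Aring) : Eeq (ι q) = Polynomial.C q := by
  have h : (Eeq.toAlgHom.comp ι) = Polynomial.CAlgHom (R := ℤ_[2]) (A := Aring) := by
    apply MvPolynomial.algHom_ext; intro i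
    fin_cases i
    · simp [ι_X0, Eeq_X0, Polynomial.CAlgHom]
    · simp [ι_X1, Eeq_X1, Polynomial.CAlgHom]
  simpa using DFunLike.congr_fun h q

lemma hcι : cpoly = ι c₂ := by
  simp [cpoly, c₂, map_add, map_mul, map_pow, ι_X0, ι_X1]

lemma hkι : (C (5 * Ring.inverse 9) * X 0 ^ 6 : Pring) = ι k₂ := by
  simp [k₂, ι, map_mul, map_pow, algebraMap_eq]

lemma Ec : Eeq cpoly = Polynomial.C c₂ := by rw [hcι, Eι]

def F : Polynomial Aring :=
  Polynomial.X ^ 2 + Polynomial.C c₂ * Polynomial.X + Polynomial.C (c₂ ^ 2 - k₂ * c₂)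

lemma EF : Eeq fpoly = F := by
  rw [fpoly, hcι, hkι]
  simp only [map_add, map_sub, map_mul, map_pow, Eeq_X2, Eι]
  rw [F]
  simp only [map_sub, map_mul, map_pow, Polynomial.C_mul, Polynomial.C_pow, Polynomial.C_sub]
  ring

lemma F_monic : F.Monic := by
  have h : (Polynomial.C c₂ * Polynomial.X + Polynomial.C (c₂ ^ 2 - k₂ * c₂)).degree < 2 :=
    lt_of_le_of_lt (Polynomial.degree_linear_le) (by norm_num)
  have := Polynomial.monic_X_pow_add (n := 2) (by exact_mod_cast h)
  simpa [F, add_assoc] using this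

lemma F_deg : F.degree = 2 := by
  rw [F, add_assoc, Polynomial.degree_add_eq_left_of_degree_lt, Polynomial.degree_X_pow]
  · norm_num
  · rw [Polynomial.degree_X_pow]
    exact lt_of_le_of_lt (Polynomial.degree_linear_le) (by norm_num)

lemma mk_eq_zero_iff (u : Pring) :
    Ideal.Quotient.mk (Ideal.span {fpoly}) u = 0 ↔ F ∣ Eeq u := by
  rw [Ideal.Quotient.eq_zero_iff_mem, Ideal.mem_span_singleton, ← EF]
  exact (map_dvd_iff Eeq).symm

lemma hbc' : mkq cpoly = bc := by
  simp [cpoly, bc, map_add, map_mul, map_pow, mkq_X0, mkq_X1]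

lemma rel : b₆ ^ 2 + b₆ * bc + bc ^ 2 =
    algebraMap ℤ_[2] RD 5 * algebraMap ℤ_[2] RD (Ring.inverse 9) * b₁ ^ 6 * bc := by
  have h0 : mkq ((X 2) ^ 2 + X 2 * cpoly + cpoly ^ 2
      - algebraMap ℤ_[2] Pring (5 * Ring.inverse 9) * (X 0) ^ 6 * cpoly) = 0 := by
    rw [mkq_apply, Ideal.Quotient.eq_zero_iff_mem]
    exact Ideal.subset_span rfl
  simp only [map_add, map_sub, map_mul, map_pow, mkq_X0, mkq_X2, hbc', AlgHom.commutes] at h0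
  linear_combination h0

/-- The map on the polynomial ring. -/
def presigma : Pring →ₐ[ℤ_[2]] RD := aeval ![b₁, b₃, -b₆ - bc]

lemma presigma_X0 : presigma (X 0) = b₁ := by simp [presigma]
lemma presigma_X1 : presigma (X 1) = b₃ := by simp [presigma]
lemma presigma_X2 : presigma (X 2) = -b₆ - bc := by simp [presigma]

lemma presigma_fpoly : presigma fpoly = 0 := by
  show presigma ((X 2) ^ 2 + X 2 * cpoly + cpoly ^ 2
      - algebraMap ℤ_[2] Pring (5 * Ring.inverse 9) * (X 0) ^ 6 * cpoly) = 0
  simp only [map_add, map_sub, map_mul, map_pow, presigma_X0, presigma_X2, AlgHom.commutes]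
  have hc : presigma cpoly = bc := by
    simp [cpoly, bc, map_add, map_mul, map_pow, presigma_X0, presigma_X1]
  rw [hc]
  linear_combination rel

/-- The Atkin–Lehner involution. -/
def σAL : RD →ₐ[ℤ_[2]] RD :=
  Ideal.Quotient.liftₐ (Ideal.span {fpoly}) presigma (by
    intro a ha
    obtain ⟨q, rfl⟩ := Ideal.mem_span_singleton.mp ha
    rw [map_mul, presigma_fpoly, zero_mul])

lemma σAL_mk (p : Pring) : σAL (Ideal.Quotient.mk _ p) = presigma p := by
  rw [σAL, Ideal.Quotient.liftₐ_apply]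
  rfl

lemma σAL_b₁ : σAL b₁ = b₁ := (σAL_mk (X 0)).trans presigma_X0
lemma σAL_b₃ : σAL b₃ = b₃ := (σAL_mk (X 1)).trans presigma_X1
lemma σAL_b₆ : σAL b₆ = -b₆ - bc := (σAL_mk (X 2)).trans presigma_X2

lemma hom_ext {σ₁ σ₂ : RD →ₐ[ℤ_[2]] RD} (h1 : σ₁ b₁ = σ₂ b₁) (h3 : σ₁ b₃ = σ₂ b₃)
    (h6 : σ₁ b₆ = σ₂ b₆) : σ₁ = σ₂ := by
  have key : σ₁.comp mkq = σ₂.comp mkq := by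
    apply MvPolynomial.algHom_ext; intro i
    fin_cases i
    · exact h1
    · exact h3
    · exact h6
  apply AlgHom.ext; intro r
  obtain ⟨p, rfl⟩ := Ideal.Quotient.mk_surjective r
  exact DFunLike.congr_fun key p

lemma mem_adjoin (q : Aring) :
    mkq (ι q) ∈ Algebra.adjoin ℤ_[2] ({b₁, b₃} : Set RD) := by
  induction q using MvPolynomial.induction_on with
  | C a =>
      have : mkq (ι (C a)) = algebraMap ℤ_[2] RD a := by
        simp [ι, mkq, algebraMap_eq]
      rw [this]; exact Subalgebra.algebraMap_mem _ a
  | add p q hp hq => rw [map_add, map_add]; exact add_mem hp hq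
  | mul_X p i hp =>
      rw [map_mul, map_mul]
      refine mul_mem hp ?_
      fin_cases i
      · rw [show (X (⟨0, by norm_num⟩ : Fin 2) : Aring) = X 0 from rfl, ι_X0, mkq_X0]
        exact Algebra.subset_adjoin (Set.mem_insert _ _)
      · rw [show (X (⟨1, by norm_num⟩ : Fin 2) : Aring) = X 1 from rfl, ι_X1, mkq_X1]
        exact Algebra.subset_adjoin (Set.mem_insert_of_mem _ rfl)

end AL

open AL

set_option synthInstance.maxHeartbeats 1000000 in
set_option maxHeartbeats 1000000 in
/-- There is a unique `ℤ_[2]`-algebra homomorphism `σ : R → R` with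
`σ(a₁) = a₁`, `σ(a₃) = a₃`, `σ(a₆) = −a₆ − c`; it is an involution and its fixed subring
is the `ℤ_[2]`-subalgebra generated by `a₁` and `a₃`.  (The Atkin–Lehner involution
`w₁₅` on the automorphic forms of the double cover, and its invariants.) -/
theorem atkin_lehner_involution_and_invariants :
    (∃! σ : RD →ₐ[ℤ_[2]] RD, σ b₁ = b₁ ∧ σ b₃ = b₃ ∧ σ b₆ = -b₆ - bc) ∧
    ∀ σ : RD →ₐ[ℤ_[2]] RD, σ b₁ = b₁ → σ b₃ = b₃ → σ b₆ = -b₆ - bc →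
      σ.comp σ = AlgHom.id ℤ_[2] RD ∧
      ∀ r : RD, σ r = r ↔ r ∈ Algebra.adjoin ℤ_[2] ({b₁, b₃} : Set RD) := by
  constructor
  · refine ⟨σAL, ⟨σAL_b₁, σAL_b₃, σAL_b₆⟩, ?_⟩
    rintro σ ⟨h1, h3, h6⟩
    exact hom_ext (by rw [h1, σAL_b₁]) (by rw [h3, σAL_b₃]) (by rw [h6, σAL_b₆])
  · intro σ h1 h3 h6
    have hbcfix : σ bc = bc := by
      simp [bc, map_add, map_mul, map_pow, h1, h3]
    constructor
    · refine hom_ext ?_ ?_ ?_ <;>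
        simp [AlgHom.comp_apply, h1, h3, h6, map_sub, map_neg, hbcfix]
    · intro r
      constructor
      · -- the hard direction
        intro hσr
        obtain ⟨p, rfl⟩ := Ideal.Quotient.mk_surjective r
        set g : Polynomial Aring := Eeq p %ₘ F with hgdef
        have hdlt : g.degree < 2 := by
          have := Polynomial.degree_modByMonic_lt (Eeq p) F_monic
          rwa [F_deg] at this
        have hnd : g.natDegree ≤ 1 := by
          by_cases hg0 : g = 0
          · simp [hg0]
          · exact Nat.lt_succ_iff.mp ((Polynomial.natDegree_lt_iff_degree_lt hg0).mpr
              (by exact_mod_cast hdlt))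
        set s : Aring := g.coeff 0 with hs
        set t : Aring := g.coeff 1 with ht
        have hgdecomp : g = Polynomial.C t * Polynomial.X + Polynomial.C s :=
          Polynomial.eq_X_add_C_of_natDegree_le_one hnd
        have hrepr : Ideal.Quotient.mk (Ideal.span {fpoly}) p = mkq (ι s) + mkq (ι t) * b₆ := by
          have h0 : Ideal.Quotient.mk (Ideal.span {fpoly}) (p - (ι s + ι t * X 2)) = 0 := by
            rw [mk_eq_zero_iff, map_sub, map_add, map_mul, Eι, Eι, Eeq_X2]
            refine ⟨Eeq p /ₘ F, ?_⟩
            have hmd := Polynomial.modByMonic_add_div (Eeq p) F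
            linear_combination -hmd + hgdecomp
          have h0' : mkq (p - (ι s + ι t * X 2)) = 0 := h0
          rw [map_sub, sub_eq_zero] at h0'
          rw [show Ideal.Quotient.mk (Ideal.span {fpoly}) p = mkq p from rfl, h0',
            map_add, map_mul, mkq_X2]
        have hfix : ∀ q : Aring, σ (mkq (ι q)) = mkq (ι q) := by
          have hkey : σ.comp (mkq.comp ι) = mkq.comp ι := by
            apply MvPolynomial.algHom_ext; intro i
            fin_cases i
            · simpa [ι_X0, mkq_X0] using h1
            · simpa [ι_X1, mkq_X1] using h3
          intro q; exact DFunLike.congr_fun hkey q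
        rw [hrepr] at hσr ⊢
        rw [map_add, map_mul, hfix s, hfix t, h6] at hσr
        have hT : mkq (ι t) * (2 * b₆ + bc) = 0 := by linear_combination -hσr
        have ht0 : Ideal.Quotient.mk (Ideal.span {fpoly}) (ι t * (2 * X 2 + cpoly)) = 0 := by
          have : mkq (ι t * (2 * X 2 + cpoly)) = mkq (ι t) * (2 * b₆ + bc) := by
            rw [map_mul, map_add, map_mul, mkq_X2, hbc', map_ofNat]
          rw [← mkq_apply, this, hT]
        have hdvd : F ∣ Polynomial.C t * (2 * Polynomial.X + Polynomial.C c₂) := by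
          have := (mk_eq_zero_iff _).mp ht0
          rwa [map_mul, map_add, map_mul, Eι, Eeq_X2, Ec, map_ofNat] at this
        have hform : Polynomial.C t * (2 * Polynomial.X + Polynomial.C c₂)
            = Polynomial.C (2 * t) * Polynomial.X + Polynomial.C (t * c₂) := by
          simp only [Polynomial.C_mul, map_ofNat]
          ring
        have hzero : Polynomial.C t * (2 * Polynomial.X + Polynomial.C c₂) = 0 := by
          refine Polynomial.eq_zero_of_dvd_of_degree_lt hdvd ?_
          rw [hform, F_deg]
          exact lt_of_le_of_lt (Polynomial.degree_linear_le) (by norm_num)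
        have h2t : 2 * t = 0 := by
          have := congrArg (fun q => Polynomial.coeff q 1) (hform ▸ hzero)
          simpa using this
        have htz : t = 0 := by
          rcases mul_eq_zero.mp h2t with h | h
          · exact absurd h two_ne_zero
          · exact h
        rw [htz, map_zero, map_zero, zero_mul, add_zero]
        exact mem_adjoin s
      · intro hr
        have hle : Algebra.adjoin ℤ_[2] ({b₁, b₃} : Set RD)
            ≤ AlgHom.equalizer σ (AlgHom.id ℤ_[2] RD) := by
          apply Algebra.adjoin_le
          rintro x (rfl | rfl)
          · exact h1
          · exact h3
        exact hle hr
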